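/- Let μ = ⨂_{k=1}^∞ μ_k be a product probability measure on ℝ^∞ = ∏_k ℝ^{m_k}, 𝔅_n the σ-algebra generated by the first n blocks of coordinates, and f ∈ L¹(μ) a linear functional. Then μ-a.e. one has (E^{𝔅_n}f)(x) = f(x_1,...,x_{m̃_n},0,0,...) + c_n, where c_n = ∫ f(0,...,0,y) d(⨂_{k>n} μ_k)(y); in particular E^{𝔅_n}f is an affine function of the first m̃_n coordinates. -/

import Mathlib

open MeasureTheory Set Filter Topology Pointwise ENNReal

/-- `μ` is the countable product of the probability measures `μs k`:
it assigns the product value to every finite-dimensional cylinder. -/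
def IsProductMeasure {E : ℕ → Type*} [∀ k, MeasurableSpace (E k)]
    (μs : ∀ k, Measure (E k)) (μ : Measure (∀ k, E k)) : Prop :=
  ∀ (n : ℕ) (s : ∀ k, Set (E k)), (∀ k, MeasurableSet (s k)) →
    μ {x | ∀ k < n, x k ∈ s k} = ∏ k ∈ Finset.range n, μs k (s k)

/-- The σ-algebra generated by the first `n` coordinate blocks of `∏_k ℝ^{m_k}`. -/
def coordSA (m : ℕ → ℕ) (n : ℕ) : MeasurableSpace (∀ k, Fin (m k) → ℝ) :=
  MeasurableSpace.comap (fun x (i : Fin n) => x i) inferInstance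

namespace Stmt6Aux

variable {m : ℕ → ℕ}

/-- The π-system of leading boxes. -/
def box (m : ℕ → ℕ) : Set (Set (∀ k, Fin (m k) → ℝ)) :=
  {t | ∃ (N : ℕ) (s : ∀ k, Set (Fin (m k) → ℝ)), (∀ k, MeasurableSet (s k)) ∧
    t = {x | ∀ k < N, x k ∈ s k}}

lemma isPiSystem_box : IsPiSystem (box m) := by
  rintro _ ⟨N₁, s, hs, rfl⟩ _ ⟨N₂, t, ht, rfl⟩ -
  refine ⟨max N₁ N₂,
    fun k => (if k < N₁ then s k else univ) ∩ (if k < N₂ then t k else univ), ?_, ?_⟩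
  · intro k
    refine MeasurableSet.inter ?_ ?_ <;> split_ifs <;>
      first | exact hs k | exact ht k | exact MeasurableSet.univ
  · ext x
    simp only [mem_inter_iff, mem_setOf_eq]
    constructor
    · rintro ⟨h1, h2⟩ k hk
      constructor <;> split_ifs with h
      · exact h1 k h
      · exact mem_univ _
      · exact h2 k h
      · exact mem_univ _
    · intro h
      constructor <;> intro k hk
      · have := (h k (lt_of_lt_of_le hk (le_max_left _ _))).1
        simpa [hk] using this
      · have := (h k (lt_of_lt_of_le hk (le_max_right _ _))).2
        simpa [hk] using this

lemma box_measurableSet {N : ℕ} {s : ∀ k, Set (Fin (m k) → ℝ)}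
    (hs : ∀ k, MeasurableSet (s k)) :
    MeasurableSet {x : ∀ k, Fin (m k) → ℝ | ∀ k < N, x k ∈ s k} := by
  have : {x : ∀ k, Fin (m k) → ℝ | ∀ k < N, x k ∈ s k} =
      ⋂ k ∈ Finset.range N, (fun x : ∀ k, Fin (m k) → ℝ => x k) ⁻¹' (s k) := by
    ext x; simp
  rw [this]
  exact MeasurableSet.biInter (Finset.range N).countable_toSet
    fun k _ => (measurable_pi_apply k) (hs k)

lemma generateFrom_box :
    MeasurableSpace.generateFrom (box m) = (inferInstance : MeasurableSpace (∀ k, Fin (m k) → ℝ)) := by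
  refine le_antisymm (MeasurableSpace.generateFrom_le ?_) ?_
  · rintro _ ⟨N, s, hs, rfl⟩
    exact box_measurableSet hs
  · refine iSup_le fun k => ?_
    rw [MeasurableSpace.comap_le_iff_le_map]
    intro u hu
    -- goal: MeasurableSet[map (eval k) (generateFrom box)] u, i.e. preimage in generateFrom box
    show MeasurableSet[MeasurableSpace.generateFrom (box m)]
      ((fun x : ∀ k, Fin (m k) → ℝ => x k) ⁻¹' u)
    refine MeasurableSpace.measurableSet_generateFrom ?_
    refine ⟨k + 1, fun j => {v | ∀ h : j = k, h ▸ v ∈ u}, ?_, ?_⟩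
    · intro j
      show MeasurableSet {v : Fin (m j) → ℝ | ∀ h : j = k, h ▸ v ∈ u}
      rcases eq_or_ne j k with rfl | hj
      · have : {v : Fin (m j) → ℝ | ∀ h : j = j, h ▸ v ∈ u} = u := by
          ext v
          constructor
          · intro hv; exact hv rfl
          · intro hv h; exact hv
        rw [this]; exact hu
      · have : {v : Fin (m j) → ℝ | ∀ h : j = k, h ▸ v ∈ u} = univ := by
          ext v; simp [hj]
        rw [this]; exact MeasurableSet.univ
    · ext x
      simp only [mem_preimage, mem_setOf_eq]
      constructor
      · intro hx j hj h
        subst h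
        exact hx
      · intro hx
        exact hx k (by omega) rfl


lemma measurable_T (n : ℕ) :
    Measurable (fun p : (∀ k, Fin (m k) → ℝ) × (∀ k, Fin (m k) → ℝ) =>
      (fun k => if k < n then p.1 k else p.2 k : ∀ k, Fin (m k) → ℝ)) := by
  refine measurable_pi_lambda _ fun k => ?_
  by_cases h : k < n <;> simp only [h, if_true, if_false]
  · exact (measurable_pi_apply k).comp measurable_fst
  · exact (measurable_pi_apply k).comp measurable_snd

lemma map_T_eq (μs : ∀ k, Measure (Fin (m k) → ℝ)) (hprob : ∀ k, IsProbabilityMeasure (μs k))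
    (μ : Measure (∀ k, Fin (m k) → ℝ)) [IsProbabilityMeasure μ]
    (hμ : IsProductMeasure μs μ) (n : ℕ) :
    Measure.map (fun p : (∀ k, Fin (m k) → ℝ) × (∀ k, Fin (m k) → ℝ) =>
      (fun k => if k < n then p.1 k else p.2 k : ∀ k, Fin (m k) → ℝ)) (μ.prod μ) = μ := by
  set T : (∀ k, Fin (m k) → ℝ) × (∀ k, Fin (m k) → ℝ) → (∀ k, Fin (m k) → ℝ) :=
    fun p => (fun k => if k < n then p.1 k else p.2 k) with hTdef
  have hT : Measurable T := measurable_T n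
  haveI : IsProbabilityMeasure (Measure.map T (μ.prod μ)) :=
    Measure.isProbabilityMeasure_map hT.aemeasurable
  refine ext_of_generate_finite (box m) generateFrom_box.symm isPiSystem_box ?_ (by simp)
  rintro _ ⟨N, s, hs, rfl⟩
  rw [Measure.map_apply hT (box_measurableSet hs)]
  have hpre : T ⁻¹' {x | ∀ k < N, x k ∈ s k} =
      {x : ∀ k, Fin (m k) → ℝ | ∀ k < N, x k ∈ (if k < n then s k else univ)} ×ˢ
      {x : ∀ k, Fin (m k) → ℝ | ∀ k < N, x k ∈ (if k < n then univ else s k)} := by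
    ext p
    simp only [mem_preimage, mem_setOf_eq, mem_prod, hTdef]
    constructor
    · intro h
      constructor <;> intro k hk <;> by_cases hkn : k < n <;>
        simp only [hkn, if_true, if_false, mem_univ] <;> simpa [hkn] using h k hk
    · rintro ⟨h1, h2⟩ k hk
      by_cases hkn : k < n
      · simpa [hkn] using h1 k hk
      · simpa [hkn] using h2 k hk
  rw [hpre, Measure.prod_prod,
    hμ N _ (fun k => by split_ifs; exacts [hs k, MeasurableSet.univ]),
    hμ N _ (fun k => by split_ifs; exacts [MeasurableSet.univ, hs k]), hμ N s hs]
  have hdistrib := Finset.prod_mul_distrib (s := Finset.range N)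
    (f := fun k => μs k (if k < n then s k else univ))
    (g := fun k => μs k (if k < n then univ else s k))
  rw [← hdistrib]
  apply Finset.prod_congr rfl
  intro k _
  by_cases hkn : k < n <;> simp [hkn, (hprob k).measure_univ]

end Stmt6Aux

open Stmt6Aux


/-- For a μ-integrable linear functional `f`, the conditional expectation with
respect to the first `n` coordinate blocks is the affine function
`x ↦ f(x₁,…,x_{m̃ₙ},0,…) + cₙ`, where `cₙ` is the integral of `f` over the tail. -/
theorem stmt6 (m : ℕ → ℕ) (μs : ∀ k, Measure (Fin (m k) → ℝ))
    (hprob : ∀ k, IsProbabilityMeasure (μs k))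
    (μ : Measure (∀ k, Fin (m k) → ℝ)) [IsProbabilityMeasure μ]
    (hμ : IsProductMeasure μs μ)
    (f : (∀ k, Fin (m k) → ℝ) → ℝ)
    (hadd : ∀ x y, f (x + y) = f x + f y)
    (hsmul : ∀ (c : ℝ) (x), f (c • x) = c * f x)
    (hf : Integrable f μ) (n : ℕ) :
    μ[f | coordSA m n] =ᵐ[μ]
      fun x => f (fun k => if k < n then x k else 0) +
        ∫ y, f (fun k => if k < n then 0 else y k) ∂μ := by
  classical
  set P : (∀ k, Fin (m k) → ℝ) → ∀ k, Fin (m k) → ℝ :=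
    fun x k => if k < n then x k else 0 with hPdef
  set Q : (∀ k, Fin (m k) → ℝ) → ∀ k, Fin (m k) → ℝ :=
    fun x k => if k < n then 0 else x k with hQdef
  set T : (∀ k, Fin (m k) → ℝ) × (∀ k, Fin (m k) → ℝ) → ∀ k, Fin (m k) → ℝ :=
    fun p k => if k < n then p.1 k else p.2 k with hTdef
  have hT : Measurable T := measurable_T n
  have hmap : Measure.map T (μ.prod μ) = μ := map_T_eq μs hprob μ hμ n
  have hPQ : ∀ x y, f (T (x, y)) = f (P x) + f (Q y) := by
    intro x y
    rw [← hadd]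
    congr 1
    funext k
    by_cases h : k < n <;> simp [hTdef, hPdef, hQdef, Pi.add_apply, h]
  haveI : (ae μ).NeBot := ae_neBot.mpr (IsProbabilityMeasure.ne_zero μ)
  -- integrability of the pieces
  have hf2 : Integrable f (Measure.map T (μ.prod μ)) := by rw [hmap]; exact hf
  have hfT : Integrable (f ∘ T) (μ.prod μ) :=
    (integrable_map_measure hf2.aestronglyMeasurable hT.aemeasurable).mp hf2
  have hfT' : Integrable (fun p : (∀ k, Fin (m k) → ℝ) × (∀ k, Fin (m k) → ℝ) =>
      f (P p.1) + f (Q p.2)) (μ.prod μ) :=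
    hfT.congr (ae_of_all _ fun p => hPQ p.1 p.2)
  obtain ⟨x₀, hx₀⟩ := hfT'.prod_right_ae.exists
  have hQint : Integrable (fun y => f (Q y)) μ := by
    refine (hx₀.sub (integrable_const (f (P x₀)))).congr (ae_of_all _ fun y => ?_)
    simp only [Pi.sub_apply]
    ring
  have hswap : Integrable (fun p : (∀ k, Fin (m k) → ℝ) × (∀ k, Fin (m k) → ℝ) =>
      f (P p.2) + f (Q p.1)) (μ.prod μ) := hfT'.swap
  obtain ⟨y₀, hy₀⟩ := hswap.prod_right_ae.exists
  have hPint : Integrable (fun x => f (P x)) μ := by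
    refine (hy₀.sub (integrable_const (f (Q y₀)))).congr (ae_of_all _ fun x => ?_)
    simp only [Pi.sub_apply]
    ring
  set c : ℝ := ∫ y, f (Q y) ∂μ with hc
  -- coordSA ≤ borel
  have hπ : Measurable (fun x : ∀ k, Fin (m k) → ℝ => fun i : Fin n => x i) :=
    measurable_pi_lambda _ fun i => measurable_pi_apply _
  have hm : coordSA m n ≤ (inferInstance : MeasurableSpace (∀ k, Fin (m k) → ℝ)) :=
    hπ.comap_le
  haveI : IsFiniteMeasure (μ.trim hm) := isFiniteMeasure_trim hm
  -- measurability of the candidate wrt coordSA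
  set f' : (∀ k, Fin (m k) → ℝ) → ℝ := hf.aestronglyMeasurable.mk f with hf'def
  have hf'sm : StronglyMeasurable f' := hf.aestronglyMeasurable.stronglyMeasurable_mk
  have hff' : f =ᵐ[μ] f' := hf.aestronglyMeasurable.ae_eq_mk
  set T' : (∀ i : Fin n, Fin (m i) → ℝ) × (∀ k, Fin (m k) → ℝ) → ∀ k, Fin (m k) → ℝ :=
    fun p k => if h : k < n then p.1 ⟨k, h⟩ else p.2 k with hT'def
  have hT' : Measurable T' := by
    refine measurable_pi_lambda _ fun k => ?_
    by_cases h : k < n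
    · simp only [hT'def, h, dif_pos]
      exact (measurable_pi_apply _).comp measurable_fst
    · simp only [hT'def, h, dif_neg, not_false_iff]
      exact (measurable_pi_apply k).comp measurable_snd
  have hTT' : ∀ x y, T' (fun i : Fin n => x i, y) = T (x, y) := by
    intro x y; funext k
    by_cases h : k < n <;> simp [hTdef, hT'def, h]
  set G₀ : (∀ i : Fin n, Fin (m i) → ℝ) → ℝ := fun z => ∫ y, f' (T' (z, y)) ∂μ with hG₀def
  have hG₀ : StronglyMeasurable G₀ := (hf'sm.comp_measurable hT').integral_prod_right'
  have hπ' : Measurable[coordSA m n] (fun x : ∀ k, Fin (m k) → ℝ => fun i : Fin n => x i) :=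
    measurable_iff_comap_le.mpr le_rfl
  have hGm : StronglyMeasurable[coordSA m n]
      (fun x : ∀ k, Fin (m k) → ℝ => G₀ (fun i : Fin n => x i)) :=
    hG₀.comp_measurable hπ'
  have hfT_ae : ∀ᵐ p ∂(μ.prod μ), f (T p) = f' (T p) := by
    refine ae_of_ae_map (p := fun z => f z = f' z) hT.aemeasurable ?_
    rw [hmap]
    exact hff'
  have hGg : (fun x => f (P x) + c) =ᵐ[μ]
      fun x : ∀ k, Fin (m k) → ℝ => G₀ (fun i : Fin n => x i) := by
    have h1 : ∀ᵐ x ∂μ, ∀ᵐ y ∂μ, f (T (x, y)) = f' (T (x, y)) := Measure.ae_ae_of_ae_prod hfT_ae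
    filter_upwards [h1] with x hx
    have e1 : G₀ (fun i : Fin n => x i) = ∫ y, f' (T (x, y)) ∂μ := by
      simp only [hG₀def]
      refine integral_congr_ae (ae_of_all _ fun y => ?_)
      show f' (T' (fun i : Fin n => x i, y)) = f' (T (x, y))
      rw [hTT' x y]
    have e2 : ∫ y, f' (T (x, y)) ∂μ = ∫ y, f (T (x, y)) ∂μ :=
      integral_congr_ae (hx.mono fun y hy => hy.symm)
    have e3 : ∫ y, f (T (x, y)) ∂μ = f (P x) + c := by
      have e4 : ∫ y, f (T (x, y)) ∂μ = ∫ y, (f (P x) + f (Q y)) ∂μ :=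
        integral_congr_ae (ae_of_all _ fun y => hPQ x y)
      rw [e4, integral_add (integrable_const _) hQint, integral_const, probReal_univ, one_smul]
    rw [e1, e2, e3]
  -- set-integral identity
  have hseq : ∀ s, MeasurableSet[coordSA m n] s → μ s < ⊤ →
      ∫ x in s, (f (P x) + c) ∂μ = ∫ x in s, f x ∂μ := by
    rintro s hs -
    obtain ⟨t, ht, rfl⟩ := hs
    set s : Set (∀ k, Fin (m k) → ℝ) := (fun x (i : Fin n) => x i) ⁻¹' t with hsdef
    have hs' : MeasurableSet s := hπ ht
    have hsT : ∀ x y, (T (x, y) ∈ s ↔ x ∈ s) := by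
      intro x y
      have hxy : (fun i : Fin n => T (x, y) i) = fun i : Fin n => x i := by
        funext i; simp [hTdef, i.isLt]
      rw [hsdef]
      simp only [mem_preimage]
      rw [hxy]
    have hind : ∀ p : (∀ k, Fin (m k) → ℝ) × (∀ k, Fin (m k) → ℝ),
        s.indicator f (T p) =
          s.indicator (fun x => f (P x)) p.1 + s.indicator (fun _ => f (Q p.2)) p.1 := by
      rintro ⟨x, y⟩
      by_cases hx : x ∈ s
      · rw [indicator_of_mem ((hsT x y).mpr hx), indicator_of_mem hx, indicator_of_mem hx]
        exact hPQ x y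
      · rw [indicator_of_notMem (fun h => hx ((hsT x y).mp h)), indicator_of_notMem hx,
          indicator_of_notMem hx]
        ring
    have hintind : Integrable (fun p => s.indicator f (T p)) (μ.prod μ) := by
      have h0 : Integrable (s.indicator f) (Measure.map T (μ.prod μ)) := by
        rw [hmap]; exact hf.indicator hs'
      exact (integrable_map_measure h0.aestronglyMeasurable hT.aemeasurable).mp h0
    have hi1 : ∫ x in s, f x ∂μ = ∫ p, s.indicator f (T p) ∂(μ.prod μ) := by
      rw [← integral_indicator hs']
      conv_lhs => rw [← hmap]
      refine integral_map hT.aemeasurable ?_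
      rw [hmap]
      exact (hf.indicator hs').aestronglyMeasurable
    have hinner : ∀ x, (∫ y, (s.indicator (fun x => f (P x)) x +
        s.indicator (fun _ => f (Q y)) x) ∂μ) = s.indicator (fun x => f (P x) + c) x := by
      intro x
      by_cases hx : x ∈ s
      · simp only [indicator_of_mem hx]
        rw [integral_add (integrable_const _) hQint, integral_const, probReal_univ, one_smul]
      · simp only [indicator_of_notMem hx]
        simp
    calc ∫ x in s, (f (P x) + c) ∂μ
        = ∫ x, s.indicator (fun x => f (P x) + c) x ∂μ := (integral_indicator hs').symm
      _ = ∫ x, (∫ y, (s.indicator (fun x => f (P x)) x +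
            s.indicator (fun _ => f (Q y)) x) ∂μ) ∂μ :=
          integral_congr_ae (ae_of_all _ fun x => (hinner x).symm)
      _ = ∫ p, (s.indicator (fun x => f (P x)) p.1 +
            s.indicator (fun _ => f (Q p.2)) p.1) ∂(μ.prod μ) :=
          (integral_prod _ (hintind.congr (ae_of_all _ hind))).symm
      _ = ∫ p, s.indicator f (T p) ∂(μ.prod μ) :=
          integral_congr_ae (ae_of_all _ fun p => (hind p).symm)
      _ = ∫ x in s, f x ∂μ := hi1.symm
  have hgint : Integrable (fun x => f (P x) + c) μ := hPint.add (integrable_const c)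
  exact (ae_eq_condExp_of_forall_setIntegral_eq hm hf
    (fun s _ _ => hgint.integrableOn) hseq ⟨_, hGm, hGg⟩).symm
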